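/- For every integer e ≥ 1, setting d = 4e + 1 and r = binom(2e+2,2) + e + 1, there exist a nonzero ternary form T ∈ S^d ℂ³ and finite sets A, B ⊆ ℙ²(ℂ) with A ∩ B = ∅ and ℓ(A) = ℓ(B) = r, such that both A and B are non-redundant sets computing T. (In particular the bound r ≤ binom(m+2,2) + ⌊m/2⌋ in the identifiability criterion for odd-degree ternary forms is sharp when d ≡ 1 mod 4.) -/

import Mathlib

open MvPolynomial

noncomputable section

/-- Projective n-space over ℂ, viewed as classes of linear forms (vectors in ℂ^{n+1}). -/
abbrev Proj (n : ℕ) := Projectivization ℂ (Fin (n + 1) → ℂ)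

instance (n : ℕ) : DecidableEq (Proj n) := Classical.decEq _

/-- The linear form with coefficient vector `v`. -/
def linForm (n : ℕ) (v : Fin (n + 1) → ℂ) : MvPolynomial (Fin (n + 1)) ℂ :=
  ∑ i, MvPolynomial.C (v i) * MvPolynomial.X i

/-- The `d`-th Veronese image of a projective point: the `d`-th power of (a representative of)
the corresponding linear form. -/
def vero (n d : ℕ) (P : Proj n) : MvPolynomial (Fin (n + 1)) ℂ :=
  linForm n P.rep ^ d

/-- `A` computes `T` : the class of `T` lies in the projective linear span of `v_d(A)`,
equivalently `T` lies in the linear span of the `d`-th powers of the points of `A`. -/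
def Computes (n d : ℕ) (A : Finset (Proj n)) (T : MvPolynomial (Fin (n + 1)) ℂ) : Prop :=
  T ∈ Submodule.span ℂ (vero n d '' (A : Set (Proj n)))

/-- `A` is a non-redundant set computing `T`. -/
def NRComputes (n d : ℕ) (A : Finset (Proj n)) (T : MvPolynomial (Fin (n + 1)) ℂ) : Prop :=
  Computes n d A T ∧ ∀ A' ⊂ A, ¬ Computes n d A' T

/-- The (Waring) rank of `T` : minimal cardinality of a finite set computing `T`. -/
def waringRank (n d : ℕ) (T : MvPolynomial (Fin (n + 1)) ℂ) : ℕ :=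
  sInf {r | ∃ A : Finset (Proj n), A.card = r ∧ Computes n d A T}

/-- `T` is identifiable: there is exactly one finite set computing `T` whose
cardinality equals the rank of `T`. -/
def Identifiable (n d : ℕ) (T : MvPolynomial (Fin (n + 1)) ℂ) : Prop :=
  ∃! A : Finset (Proj n), A.card = waringRank n d T ∧ Computes n d A T

/-- The evaluation map of degree `j` on the chosen homogeneous coordinates of `Z`. -/
def evalMap (n j : ℕ) (Z : Finset (Proj n)) :
    MvPolynomial.homogeneousSubmodule (Fin (n + 1)) ℂ j →ₗ[ℂ] (Z → ℂ) where
  toFun F := fun P => MvPolynomial.eval (P.1).rep F.1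
  map_add' F G := by funext P; simp
  map_smul' c F := by funext P; simp

/-- The Hilbert function of the finite set `Z` (at a natural number `j`). -/
def hilbN (n : ℕ) (Z : Finset (Proj n)) (j : ℕ) : ℕ :=
  Module.finrank ℂ (LinearMap.range (evalMap n j Z))

/-- The Hilbert function of the finite set `Z` (zero in negative degrees). -/
def hilb (n : ℕ) (Z : Finset (Proj n)) (j : ℤ) : ℕ :=
  if j < 0 then 0 else hilbN n Z j.toNat

/-- The first difference of the Hilbert function. -/
def Dhilb (n : ℕ) (Z : Finset (Proj n)) (j : ℤ) : ℤ :=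
  (hilb n Z j : ℤ) - (hilb n Z (j - 1) : ℤ)

/-- The `d`-th Kruskal rank of `A` : the largest `k` such that every subset of `A`
with at most `k` elements has linearly independent image under `v_d`. -/
def kruskalRank (n d : ℕ) (A : Finset (Proj n)) : ℕ :=
  sSup {k | k ≤ A.card ∧
    ∀ A' ⊆ A, A'.card ≤ k → LinearIndependent ℂ (fun P : A' => vero n d P.1)}

/-- The Cayley–Bacharach property in degree `d` for the finite set `Z`. -/
def CB (n d : ℕ) (Z : Finset (Proj n)) : Prop :=
  ∀ P ∈ Z, ∀ F : MvPolynomial (Fin (n + 1)) ℂ, F.IsHomogeneous d →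
    (∀ Q ∈ Z, Q ≠ P → MvPolynomial.eval Q.rep F = 0) → MvPolynomial.eval P.rep F = 0

end


namespace Stmt13Aux

open Finset MvPolynomial

noncomputable section


/-- Alternating binomial sums kill monomials of low degree. -/
theorem key_scalar : ∀ (a m : ℕ), a < m →
    ∑ i ∈ range (m+1), (-1:ℂ)^i * (m.choose i) * (i:ℂ)^a = 0 := by
  intro a
  induction a using Nat.strong_induction_on with
  | _ a ih =>
    intro m hm
    match a with
    | 0 =>
      have h := Int.alternating_sum_range_choose (n := m)
      have hm0 : m ≠ 0 := by omega
      rw [if_neg hm0] at h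
      have := congrArg (fun z : ℤ => (z : ℂ)) h
      push_cast at this
      simpa [pow_zero, mul_one] using this
    | a + 1 =>
      obtain ⟨m', rfl⟩ : ∃ m', m = m' + 1 := ⟨m - 1, by omega⟩
      rw [Finset.sum_range_succ']
      simp only [Nat.cast_zero, Nat.choose_zero_right, pow_succ, mul_zero, zero_mul,
        mul_one, add_zero]
      have hS : ∑ k ∈ range (m'+1), (-1:ℂ)^k * (m'.choose k) * ((k:ℂ)+1)^a = 0 := by
        have expand : ∀ k : ℕ, ((k:ℂ)+1)^a = ∑ b ∈ range (a+1), (a.choose b : ℂ) * (k:ℂ)^b := by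
          intro k
          rw [add_pow]
          exact Finset.sum_congr rfl (fun b _ => by ring)
        calc ∑ k ∈ range (m'+1), (-1:ℂ)^k * (m'.choose k) * ((k:ℂ)+1)^a
            = ∑ k ∈ range (m'+1), ∑ b ∈ range (a+1),
                (a.choose b : ℂ) * ((-1:ℂ)^k * (m'.choose k) * (k:ℂ)^b) := by
              refine Finset.sum_congr rfl (fun k _ => ?_)
              rw [expand k, Finset.mul_sum]
              exact Finset.sum_congr rfl (fun b _ => by ring)
          _ = ∑ b ∈ range (a+1), (a.choose b : ℂ) *
                ∑ k ∈ range (m'+1), (-1:ℂ)^k * (m'.choose k) * (k:ℂ)^b := by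
              rw [Finset.sum_comm]
              exact Finset.sum_congr rfl (fun b _ => by rw [Finset.mul_sum])
          _ = 0 := by
              refine Finset.sum_eq_zero (fun b hb => ?_)
              rw [ih b (Finset.mem_range.mp hb) m' (by
                have := Finset.mem_range.mp hb; omega), mul_zero]
      calc ∑ k ∈ range (m'+1), (-1:ℂ)^(k+1) * ((m'+1).choose (k+1)) * ((k+1:ℕ):ℂ)^(a+1)
          = ∑ k ∈ range (m'+1), (-((m':ℂ)+1)) * ((-1:ℂ)^k * (m'.choose k) * ((k:ℂ)+1)^a) := by
            refine Finset.sum_congr rfl (fun k _ => ?_)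
            have h1 : ((m'+1).choose (k+1) : ℂ) * ((k:ℂ)+1) = ((m':ℂ)+1) * (m'.choose k) := by
              have h0 := congrArg (fun z : ℕ => (z : ℂ)) (Nat.add_one_mul_choose_eq m' k)
              push_cast at h0
              linear_combination -h0
            push_cast
            linear_combination (-((-1:ℂ)^k) * ((k:ℂ)+1)^a) * h1
        _ = 0 := by rw [← Finset.mul_sum, hS, mul_zero]

variable {S : Type*} [CommRing S] [Algebra ℂ S]

theorem dep1 (m b : ℕ) (hb : b < m) (y z : S) :
    ∑ j ∈ range (m+1), ((-1:ℂ)^j * (m.choose j)) • ((j:ℂ) • y + z)^b = 0 := by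
  have expand : ∀ j : ℕ, ((j:ℂ) • y + z)^b
      = ∑ p ∈ range (b+1), (j:ℂ)^p • (y^p * z^(b-p) * (b.choose p : ℂ) • (1:S)) := by
    intro j
    rw [add_pow]
    refine Finset.sum_congr rfl (fun p _ => ?_)
    rw [smul_pow]
    simp only [smul_mul_assoc, smul_smul, Algebra.smul_def, map_mul, map_natCast]
    ring
  calc ∑ j ∈ range (m+1), ((-1:ℂ)^j * (m.choose j)) • ((j:ℂ) • y + z)^b
      = ∑ p ∈ range (b+1), ∑ j ∈ range (m+1),
          ((-1:ℂ)^j * (m.choose j) * (j:ℂ)^p) • (y^p * z^(b-p) * (b.choose p : ℂ) • (1:S)) := by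
        rw [Finset.sum_comm]
        refine Finset.sum_congr rfl (fun j _ => ?_)
        rw [expand j, Finset.smul_sum]
        exact Finset.sum_congr rfl (fun p _ => by rw [smul_smul])
    _ = 0 := by
        refine Finset.sum_eq_zero (fun p hp => ?_)
        rw [← Finset.sum_smul, key_scalar p m (by have := Finset.mem_range.mp hp; omega),
          zero_smul]

theorem dep (m d : ℕ) (hd : d < 2*m) (x y z : S) :
    ∑ i ∈ range (m+1), ∑ j ∈ range (m+1),
      ((-1:ℂ)^(i+j) * (m.choose i) * (m.choose j)) • ((i:ℂ) • x + ((j:ℂ) • y + z))^d = 0 := by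
  have expand : ∀ i j : ℕ, ((i:ℂ) • x + ((j:ℂ) • y + z))^d
      = ∑ a ∈ range (d+1), ((i:ℂ)^a * (d.choose a : ℂ)) • (x^a * ((j:ℂ) • y + z)^(d-a)) := by
    intro i j
    rw [add_pow]
    refine Finset.sum_congr rfl (fun a _ => ?_)
    rw [smul_pow]
    simp only [smul_mul_assoc, smul_smul, Algebra.smul_def, map_mul, map_natCast]
    ring
  calc ∑ i ∈ range (m+1), ∑ j ∈ range (m+1),
        ((-1:ℂ)^(i+j) * (m.choose i) * (m.choose j)) • ((i:ℂ) • x + ((j:ℂ) • y + z))^d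
      = ∑ i ∈ range (m+1), ∑ j ∈ range (m+1), ∑ a ∈ range (d+1),
          ((-1:ℂ)^i * (m.choose i) * (i:ℂ)^a * (d.choose a : ℂ)) •
            (x^a * (((-1:ℂ)^j * (m.choose j)) • ((j:ℂ) • y + z)^(d-a))) := by
        refine Finset.sum_congr rfl (fun i _ => Finset.sum_congr rfl (fun j _ => ?_))
        rw [expand i j, Finset.smul_sum]
        refine Finset.sum_congr rfl (fun a _ => ?_)
        rw [mul_smul_comm, smul_smul, smul_smul]
        congr 1
        ring
    _ = ∑ i ∈ range (m+1), ∑ a ∈ range (d+1),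
          ((-1:ℂ)^i * (m.choose i) * (i:ℂ)^a * (d.choose a : ℂ)) •
            (x^a * ∑ j ∈ range (m+1), ((-1:ℂ)^j * (m.choose j)) • ((j:ℂ) • y + z)^(d-a)) := by
        refine Finset.sum_congr rfl (fun i _ => ?_)
        rw [Finset.sum_comm]
        refine Finset.sum_congr rfl (fun a _ => ?_)
        rw [Finset.mul_sum, Finset.smul_sum]
    _ = 0 := by
        rw [Finset.sum_comm]
        refine Finset.sum_eq_zero (fun a ha => ?_)
        by_cases ham : a < m
        · rw [← Finset.sum_smul, ← Finset.sum_mul, key_scalar a m ham, zero_mul, zero_smul]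
        · rw [dep1 m (d-a) (by have := Finset.mem_range.mp ha; omega) y z]
          simp

-- helper defs
def dot (w v : Fin 3 → ℂ) : ℂ := ∑ c, w c * v c

def Dop (w : Fin 3 → ℂ) : MvPolynomial (Fin 3) ℂ →ₗ[ℂ] MvPolynomial (Fin 3) ℂ :=
  ∑ c, w c • (MvPolynomial.pderiv c).toLinearMap

lemma linForm_smul (t : ℂ) (v : Fin 3 → ℂ) : linForm 2 (t • v) = C t * linForm 2 v := by
  simp only [linForm, Finset.mul_sum, Pi.smul_apply, smul_eq_mul, map_mul]
  exact Finset.sum_congr rfl (fun i _ => by ring)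

lemma pderiv_linForm (c : Fin 3) (v : Fin 3 → ℂ) :
    MvPolynomial.pderiv c (linForm 2 v) = C (v c) := by
  simp only [linForm, map_sum, pderiv_C_mul, pderiv_X]
  rw [Finset.sum_eq_single c]
  · simp
  · intro b _ hb; simp [Pi.single_apply, hb]
  · intro h; exact absurd (Finset.mem_univ c) h

lemma Dop_linForm_pow (w v : Fin 3 → ℂ) (m : ℕ) :
    Dop w (linForm 2 v ^ m) = ((m : ℂ) * dot w v) • (linForm 2 v ^ (m-1)) := by
  have h1 : ∀ c : Fin 3, MvPolynomial.pderiv c (linForm 2 v ^ m)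
      = ((m : ℂ) * v c) • (linForm 2 v ^ (m-1)) := by
    intro c
    rw [Derivation.leibniz_pow, pderiv_linForm]
    simp only [smul_eq_mul, nsmul_eq_mul, MvPolynomial.smul_eq_C_mul, map_mul]
    rw [show ((m : MvPolynomial (Fin 3) ℂ)) = C (m : ℂ) by simp]
    ring
  have h2 : ∀ c : Fin 3, (MvPolynomial.pderiv c).toLinearMap (linForm 2 v ^ m)
      = ((m : ℂ) * v c) • (linForm 2 v ^ (m-1)) := h1
  simp only [Dop, LinearMap.sum_apply, LinearMap.smul_apply, h2, smul_smul, dot]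
  rw [← Finset.sum_smul, Finset.mul_sum]
  congr 1
  exact Finset.sum_congr rfl (fun c _ => by ring)

def applyD : List (Fin 3 → ℂ) → (MvPolynomial (Fin 3) ℂ →ₗ[ℂ] MvPolynomial (Fin 3) ℂ)
  | [] => LinearMap.id
  | w :: ws => (applyD ws).comp (Dop w)

lemma descFact_mul (m k : ℕ) : m.descFactorial (k+1) = m * (m-1).descFactorial k := by
  cases m with
  | zero => simp
  | succ m' => rw [Nat.succ_descFactorial_succ]; simp

lemma applyD_linForm_pow (v : Fin 3 → ℂ) :
    ∀ (ws : List (Fin 3 → ℂ)) (m : ℕ),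
    applyD ws (linForm 2 v ^ m)
      = ((m.descFactorial ws.length : ℂ) * (ws.map (fun w => dot w v)).prod) •
          (linForm 2 v ^ (m - ws.length)) := by
  intro ws
  induction ws with
  | nil => intro m; simp [applyD]
  | cons w ws ih =>
      intro m
      simp only [applyD, LinearMap.comp_apply, Dop_linForm_pow, map_smul, ih (m-1),
        List.length_cons, List.map_cons, List.prod_cons, smul_smul]
      rw [descFact_mul m ws.length]
      have : m - 1 - ws.length = m - (ws.length + 1) := by omega
      rw [this]
      congr 1
      push_cast
      ring

def p0 : Fin 3 → ℂ := ![0, 0, 1]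

lemma eval_linForm_pow (v : Fin 3 → ℂ) (k : ℕ) :
    MvPolynomial.eval p0 (linForm 2 v ^ k) = (v 2)^k := by
  rw [map_pow]
  congr 1
  simp [linForm, p0, Fin.sum_univ_three]

lemma dot_row (i' : ℕ) (t : ℂ) (i j : ℕ) :
    dot ![1, 0, -(i':ℂ)] (t • ![(i:ℂ), (j:ℂ), 1]) = t * ((i:ℂ) - i') := by
  simp [dot, Fin.sum_univ_three]; ring

lemma dot_col (j' : ℕ) (t : ℂ) (i j : ℕ) :
    dot ![0, 1, -(j':ℂ)] (t • ![(i:ℂ), (j:ℂ), 1]) = t * ((j:ℂ) - j') := by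
  simp [dot, Fin.sum_univ_three]; ring

lemma indep (d : ℕ) (I J : Finset ℕ) (hd : I.card + J.card ≤ d + 2)
    (w : ℕ → ℕ → Fin 3 → ℂ) (t : ℕ → ℕ → ℂ)
    (ht : ∀ i ∈ I, ∀ j ∈ J, t i j ≠ 0 ∧ w i j = t i j • ![(i:ℂ), (j:ℂ), 1])
    (lam : ℕ → ℕ → ℂ)
    (h : ∑ i ∈ I, ∑ j ∈ J, lam i j • (linForm 2 (w i j))^d = 0) :
    ∀ i₀ ∈ I, ∀ j₀ ∈ J, lam i₀ j₀ = 0 := by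
  intro i₀ hi₀ j₀ hj₀
  classical
  set ws : List (Fin 3 → ℂ) :=
    ((I.erase i₀).toList.map (fun i' : ℕ => ![(1:ℂ), 0, -(i':ℂ)])) ++
    ((J.erase j₀).toList.map (fun j' : ℕ => ![(0:ℂ), 1, -(j':ℂ)])) with hws
  have hlen : ws.length = (I.card - 1) + (J.card - 1) := by
    simp [hws, Finset.length_toList, Finset.card_erase_of_mem, hi₀, hj₀]
  have hKd : ws.length ≤ d := by
    have h1 : 1 ≤ I.card := Finset.card_pos.mpr ⟨i₀, hi₀⟩
    have h2 : 1 ≤ J.card := Finset.card_pos.mpr ⟨j₀, hj₀⟩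
    omega
  -- the product of dots against the vector of (i,j)
  have hprod : ∀ i j : ℕ, (ws.map (fun wv => dot wv (t i j • ![(i:ℂ), (j:ℂ), 1]))).prod
      = ((I.erase i₀).prod (fun i' => t i j * ((i:ℂ) - i'))) *
        ((J.erase j₀).prod (fun j' => t i j * ((j:ℂ) - j'))) := by
    intro i j
    simp only [hws, List.map_append, List.map_map, List.prod_append]
    rw [Function.comp_def, Function.comp_def]
    simp only [dot_row, dot_col]
    rw [Finset.prod_map_toList, Finset.prod_map_toList]
  -- apply the functional
  have key := congrArg (fun F => MvPolynomial.eval p0 (applyD ws F)) h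
  simp only [map_zero, map_sum, map_smul] at key
  have keyterm : ∀ i ∈ I, ∀ j ∈ J,
      MvPolynomial.eval p0 (applyD ws ((linForm 2 (w i j))^d))
        = (d.descFactorial ws.length : ℂ) *
          (((I.erase i₀).prod (fun i' => t i j * ((i:ℂ) - i'))) *
           ((J.erase j₀).prod (fun j' => t i j * ((j:ℂ) - j')))) * (t i j)^(d - ws.length) := by
    intro i hi j hj
    obtain ⟨htne, hwv⟩ := ht i hi j hj
    rw [hwv, applyD_linForm_pow, hprod]
    rw [MvPolynomial.smul_eq_C_mul, map_mul, eval_C, eval_linForm_pow]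
    have : (t i j • ![(i:ℂ), (j:ℂ), 1]) 2 = t i j := by simp
    rw [this]
  -- all terms except (i₀, j₀) vanish
  have hzero : ∀ i ∈ I, ∀ j ∈ J, (i, j) ≠ (i₀, j₀) →
      lam i j * MvPolynomial.eval p0 (applyD ws ((linForm 2 (w i j))^d)) = 0 := by
    intro i hi j hj hne
    rw [keyterm i hi j hj]
    rcases (by by_contra hc; push_neg at hc; exact hne (by simp [hc.1, hc.2]) :
      i ≠ i₀ ∨ j ≠ j₀) with hcase | hcase
    · rw [Finset.prod_eq_zero (Finset.mem_erase.mpr ⟨hcase, hi⟩) (by ring)]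
      ring
    · rw [Finset.prod_eq_zero (i := j) (Finset.mem_erase.mpr ⟨hcase, hj⟩) (by ring)]
      ring
  have key : ∑ i ∈ I, ∑ j ∈ J,
      lam i j * MvPolynomial.eval p0 (applyD ws ((linForm 2 (w i j))^d)) = 0 := by
    have h1 := congrArg (applyD ws) h
    simp only [map_sum, map_smul, map_zero] at h1
    have h2 := congrArg (MvPolynomial.eval p0) h1
    simp only [map_sum, map_zero, MvPolynomial.smul_eq_C_mul, map_mul, eval_C] at h2
    exact h2
  rw [Finset.sum_eq_single_of_mem i₀ hi₀ (fun i hi hne =>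
        Finset.sum_eq_zero (fun j hj => hzero i hi j hj (by simp [Prod.ext_iff, hne]))),
      Finset.sum_eq_single_of_mem j₀ hj₀ (fun j hj hne =>
        hzero i₀ hi₀ j hj (by simp [Prod.ext_iff, hne])),
      keyterm i₀ hi₀ j₀ hj₀] at key
  obtain ⟨htne, -⟩ := ht i₀ hi₀ j₀ hj₀
  have hdf : (d.descFactorial ws.length : ℂ) ≠ 0 :=
    Nat.cast_ne_zero.mpr (fun hc => by
      have := Nat.descFactorial_eq_zero_iff_lt.mp hc; omega)
  have hPI : (∏ i' ∈ I.erase i₀, (t i₀ j₀ * ((i₀:ℂ) - i'))) ≠ 0 :=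
    Finset.prod_ne_zero_iff.mpr (fun i' hi' => mul_ne_zero htne
      (sub_ne_zero.mpr (fun hc => (Finset.mem_erase.mp hi').1
        (Nat.cast_injective hc).symm)))
  have hPJ : (∏ j' ∈ J.erase j₀, (t i₀ j₀ * ((j₀:ℂ) - j'))) ≠ 0 :=
    Finset.prod_ne_zero_iff.mpr (fun j' hj' => mul_ne_zero htne
      (sub_ne_zero.mpr (fun hc => (Finset.mem_erase.mp hj').1
        (Nat.cast_injective hc).symm)))
  have hT : (t i₀ j₀)^(d - ws.length) ≠ 0 := pow_ne_zero _ htne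
  exact (mul_eq_zero.mp key).resolve_right
    (mul_ne_zero (mul_ne_zero hdf (mul_ne_zero hPI hPJ)) hT)

def vpt (i j : ℕ) : Fin 3 → ℂ := ![(i:ℂ), (j:ℂ), 1]

lemma vpt_ne (i j : ℕ) : vpt i j ≠ 0 := by
  intro h
  have := congrFun h 2
  simp [vpt] at this

def ppt (i j : ℕ) : Proj 2 := Projectivization.mk ℂ (vpt i j) (vpt_ne i j)

lemma ppt_inj {i j k l : ℕ} (h : ppt i j = ppt k l) : i = k ∧ j = l := by
  rw [ppt, ppt, Projectivization.mk_eq_mk_iff] at h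
  obtain ⟨a, ha⟩ := h
  have h2 := congrFun ha 2
  simp [vpt, Units.smul_def] at h2
  have h0 := congrFun ha 0
  have h1 := congrFun ha 1
  simp [vpt, Units.smul_def, h2] at h0 h1
  exact ⟨Nat.cast_injective h0.symm, Nat.cast_injective h1.symm⟩

lemma pinj : Function.Injective (fun q : ℕ × ℕ => ppt q.1 q.2) := by
  intro q q' h
  obtain ⟨h1, h2⟩ := ppt_inj h
  exact Prod.ext h1 h2

lemma hrep (i j : ℕ) : ∃ t : ℂ, t ≠ 0 ∧ (ppt i j).rep = t • vpt i j := by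
  obtain ⟨a, ha⟩ := Projectivization.exists_smul_eq_mk_rep ℂ (vpt i j) (vpt_ne i j)
  exact ⟨a, a.ne_zero, by rw [ppt, ← ha, Units.smul_def]⟩

noncomputable def tc (i j : ℕ) : ℂ := (hrep i j).choose

lemma tc_ne (i j : ℕ) : tc i j ≠ 0 := (hrep i j).choose_spec.1

lemma rep_eq (i j : ℕ) : (ppt i j).rep = tc i j • vpt i j := (hrep i j).choose_spec.2

lemma vero_ppt (d i j : ℕ) :
    vero 2 d (ppt i j) = (tc i j ^ d) • (linForm 2 (vpt i j))^d := by
  rw [vero, rep_eq, linForm_smul, mul_pow, ← MvPolynomial.C_pow, ← MvPolynomial.smul_eq_C_mul]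

lemma linForm_pow_eq_smul_vero (d i j : ℕ) :
    (linForm 2 (vpt i j))^d = (tc i j ^ d)⁻¹ • vero 2 d (ppt i j) := by
  rw [vero_ppt, smul_smul, inv_mul_cancel₀ (pow_ne_zero _ (tc_ne i j)), one_smul]

lemma span_finset_coeffs {M : Type*} [AddCommGroup M] [Module ℂ M]
    (f : Proj 2 → M) (S : Finset (Proj 2)) (x : M)
    (hx : x ∈ Submodule.span ℂ (f '' ↑S)) :
    ∃ g : Proj 2 → ℂ, x = ∑ Q ∈ S, g Q • f Q := by
  classical
  rw [Set.image_eq_range] at hx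
  obtain ⟨cf, hcf⟩ := (Finsupp.mem_span_range_iff_exists_finsupp).mp hx
  refine ⟨fun Q => if h : Q ∈ S then cf ⟨Q, h⟩ else 0, ?_⟩
  rw [← hcf, Finsupp.sum_fintype _ _ (by simp)]
  rw [← Finset.sum_coe_sort S]
  refine Finset.sum_congr rfl (fun Q _ => ?_)
  have hQ : (Q : Proj 2) ∈ S := Q.2
  simp [hQ]

lemma computes_gen (d : ℕ) (IJ : Finset (ℕ × ℕ)) (co : ℕ → ℕ → ℂ) :
    (∑ q ∈ IJ, co q.1 q.2 • (linForm 2 (vpt q.1 q.2))^d) ∈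
      Submodule.span ℂ (vero 2 d '' ↑(IJ.image (fun q : ℕ × ℕ => ppt q.1 q.2))) := by
  refine Submodule.sum_mem _ (fun q hq => ?_)
  rw [linForm_pow_eq_smul_vero, smul_smul]
  refine Submodule.smul_mem _ _ (Submodule.subset_span ?_)
  exact ⟨ppt q.1 q.2, by simp [Finset.mem_image]; exact ⟨q.1, q.2, hq, rfl⟩, rfl⟩

lemma nonred (d : ℕ) (I J : Finset ℕ) (hd : I.card + J.card ≤ d + 2)
    (co : ℕ → ℕ → ℂ) (hco : ∀ i ∈ I, ∀ j ∈ J, co i j ≠ 0)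
    (A' : Finset (Proj 2)) (hA' : A' ⊂ (I ×ˢ J).image (fun q : ℕ × ℕ => ppt q.1 q.2)) :
    (∑ q ∈ I ×ˢ J, co q.1 q.2 • (linForm 2 (vpt q.1 q.2))^d) ∉
      Submodule.span ℂ (vero 2 d '' ↑A') := by
  classical
  intro hmem
  set T := ∑ q ∈ I ×ˢ J, co q.1 q.2 • (linForm 2 (vpt q.1 q.2))^d with hT
  obtain ⟨P, hPS, hPA'⟩ := Finset.exists_of_ssubset hA'
  obtain ⟨q₀, hq₀, rfl⟩ := Finset.mem_image.mp hPS
  have hsub : A' ⊆ ((I ×ˢ J).image (fun q : ℕ × ℕ => ppt q.1 q.2)).erase (ppt q₀.1 q₀.2) :=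
    fun x hx => Finset.mem_erase.mpr ⟨fun hc => hPA' (hc ▸ hx), hA'.1 hx⟩
  have herase : ((I ×ˢ J).image (fun q : ℕ × ℕ => ppt q.1 q.2)).erase (ppt q₀.1 q₀.2)
      = ((I ×ˢ J).erase q₀).image (fun q : ℕ × ℕ => ppt q.1 q.2) := by
    rw [Finset.image_erase pinj]
  have hmem2 : T ∈ Submodule.span ℂ
      (vero 2 d '' ↑(((I ×ˢ J).erase q₀).image (fun q : ℕ × ℕ => ppt q.1 q.2))) := by
    rw [← herase]
    exact Submodule.span_mono (Set.image_mono (by exact_mod_cast hsub)) hmem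
  obtain ⟨g, hg⟩ := span_finset_coeffs (vero 2 d) _ T hmem2
  rw [Finset.sum_image (fun x _ y _ h => pinj h)] at hg
  -- rewrite in terms of linForm powers
  have hg2 : T = ∑ q ∈ (I ×ˢ J).erase q₀,
      (g (ppt q.1 q.2) * tc q.1 q.2 ^ d) • (linForm 2 (vpt q.1 q.2))^d := by
    rw [hg]
    exact Finset.sum_congr rfl (fun q _ => by rw [vero_ppt, smul_smul])
  -- the combined vanishing combination
  set G : ℕ × ℕ → ℂ := fun q => if q = q₀ then 0 else g (ppt q.1 q.2) * tc q.1 q.2 ^ d with hG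
  have hzero : ∑ q ∈ I ×ˢ J, (co q.1 q.2 - G q) • (linForm 2 (vpt q.1 q.2))^d = 0 := by
    have hsplit : ∑ q ∈ I ×ˢ J, G q • (linForm 2 (vpt q.1 q.2))^d
        = ∑ q ∈ (I ×ˢ J).erase q₀,
            (g (ppt q.1 q.2) * tc q.1 q.2 ^ d) • (linForm 2 (vpt q.1 q.2))^d := by
      rw [← Finset.sum_erase_add _ _ hq₀]
      simp only [hG, if_pos rfl, zero_smul, add_zero]
      exact Finset.sum_congr rfl (fun q hq => by
        rw [if_neg (Finset.mem_erase.mp hq).1])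
    simp only [sub_smul]
    rw [Finset.sum_sub_distrib, hsplit, ← hg2, ← hT, sub_self]
  rw [Finset.sum_product] at hzero
  have := indep d I J hd vpt (fun _ _ => (1:ℂ))
    (fun i _ j _ => ⟨one_ne_zero, (one_smul _ _).symm⟩)
    (fun i j => co i j - G (i, j)) hzero q₀.1 (Finset.mem_product.mp hq₀).1
    q₀.2 (Finset.mem_product.mp hq₀).2
  rw [hG] at this
  simp only [Prod.mk.eta, if_pos rfl, if_true] at this
  exact hco q₀.1 (Finset.mem_product.mp hq₀).1 q₀.2 (Finset.mem_product.mp hq₀).2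
    (by rwa [sub_zero] at this)

lemma linForm_vpt (i j : ℕ) :
    (i:ℂ) • (X 0 : MvPolynomial (Fin 3) ℂ) + ((j:ℂ) • X 1 + X 2) = linForm 2 (vpt i j) := by
  simp [linForm, vpt, Fin.sum_univ_three, MvPolynomial.smul_eq_C_mul]
  ring

lemma linForm_homog (v : Fin 3 → ℂ) : (linForm 2 v).IsHomogeneous 1 :=
  MvPolynomial.IsHomogeneous.sum _ _ _ (fun i _ => MvPolynomial.isHomogeneous_C_mul_X _ _)

lemma smul_pow_homog (c : ℂ) (v : Fin 3 → ℂ) (d : ℕ) :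
    (c • (linForm 2 v)^d).IsHomogeneous d := by
  rw [MvPolynomial.smul_eq_C_mul]
  exact MvPolynomial.IsHomogeneous.C_mul (by simpa using (linForm_homog v).pow d) c


end

end Stmt13Aux

open Stmt13Aux

/-- Sharpness, `d ≡ 1 (mod 4)`: for `d = 4e+1`, `e ≥ 1`, there is a nonzero form of
degree `d` with two disjoint non-redundant decompositions of length
`binom(2e+2,2) + e + 1`. -/

theorem stmt13 (e : ℕ) (he : 1 ≤ e) :
    ∃ (T : MvPolynomial (Fin 3) ℂ) (A B : Finset (Proj 2)),
      T ≠ 0 ∧ T.IsHomogeneous (4 * e + 1) ∧ A ∩ B = ∅ ∧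
      A.card = Nat.choose (2 * e + 2) 2 + e + 1 ∧
      B.card = Nat.choose (2 * e + 2) 2 + e + 1 ∧
      NRComputes 2 (4 * e + 1) A T ∧ NRComputes 2 (4 * e + 1) B T := by
  classical
  set d := 4*e+1 with hd
  set m := 2*e+1 with hm
  set co : ℕ → ℕ → ℂ := fun i j => (-1:ℂ)^(i+j) * (m.choose i) * (m.choose j) with hco
  set I1 : Finset ℕ := Finset.range (e+1) with hI1
  set I2 : Finset ℕ := Finset.Ico (e+1) (m+1) with hI2
  set J : Finset ℕ := Finset.range (m+1) with hJ
  set T : MvPolynomial (Fin 3) ℂ :=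
    ∑ q ∈ I1 ×ˢ J, co q.1 q.2 • (linForm 2 (vpt q.1 q.2))^d with hT
  set A : Finset (Proj 2) := (I1 ×ˢ J).image (fun q : ℕ × ℕ => ppt q.1 q.2) with hA
  set B : Finset (Proj 2) := (I2 ×ˢ J).image (fun q : ℕ × ℕ => ppt q.1 q.2) with hB
  have hcards1 : I1.card + J.card ≤ d + 2 := by
    simp only [hI1, hJ, Finset.card_range]; omega
  have hcards2 : I2.card + J.card ≤ d + 2 := by
    simp only [hI2, hJ, Finset.card_range, Nat.card_Ico]; omega
  have hcoI1 : ∀ i ∈ I1, ∀ j ∈ J, co i j ≠ 0 := by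
    intro i hi j hj
    have hi' : i ≤ m := by have := Finset.mem_range.mp hi; omega
    have hj' : j ≤ m := by have := Finset.mem_range.mp hj; omega
    exact mul_ne_zero (mul_ne_zero (pow_ne_zero _ (by norm_num))
      (Nat.cast_ne_zero.mpr (Nat.choose_pos hi').ne')) (Nat.cast_ne_zero.mpr (Nat.choose_pos hj').ne')
  have hcoI2 : ∀ i ∈ I2, ∀ j ∈ J, co i j ≠ 0 := by
    intro i hi j hj
    have hi' : i ≤ m := by have := Finset.mem_Ico.mp hi; omega
    have hj' : j ≤ m := by have := Finset.mem_range.mp hj; omega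
    exact mul_ne_zero (mul_ne_zero (pow_ne_zero _ (by norm_num))
      (Nat.cast_ne_zero.mpr (Nat.choose_pos hi').ne')) (Nat.cast_ne_zero.mpr (Nat.choose_pos hj').ne')
  have hbig : ∑ q ∈ (Finset.range (m+1)) ×ˢ J, co q.1 q.2 • (linForm 2 (vpt q.1 q.2))^d = 0 := by
    rw [Finset.sum_product, hJ]
    have hdep := dep (S := MvPolynomial (Fin 3) ℂ) m d (by omega) (X 0) (X 1) (X 2)
    calc ∑ i ∈ Finset.range (m+1), ∑ j ∈ Finset.range (m+1), co i j • (linForm 2 (vpt i j))^d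
        = ∑ i ∈ Finset.range (m+1), ∑ j ∈ Finset.range (m+1),
            ((-1:ℂ)^(i+j) * (m.choose i) * (m.choose j)) •
              ((i:ℂ) • (X 0 : MvPolynomial (Fin 3) ℂ) + ((j:ℂ) • X 1 + X 2))^d := by
          exact Finset.sum_congr rfl (fun i _ => Finset.sum_congr rfl (fun j _ => by
            rw [linForm_vpt]))
      _ = 0 := hdep
  have hsplit : T + (∑ q ∈ I2 ×ˢ J, co q.1 q.2 • (linForm 2 (vpt q.1 q.2))^d)
      = ∑ q ∈ (Finset.range (m+1)) ×ˢ J, co q.1 q.2 • (linForm 2 (vpt q.1 q.2))^d := by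
    rw [hT, Finset.sum_product, Finset.sum_product, Finset.sum_product, hI1, hI2]
    exact Finset.sum_range_add_sum_Ico _ (by omega)
  have hTB : T = ∑ q ∈ I2 ×ˢ J, (-(co q.1 q.2)) • (linForm 2 (vpt q.1 q.2))^d := by
    have h1 : T = -(∑ q ∈ I2 ×ˢ J, co q.1 q.2 • (linForm 2 (vpt q.1 q.2))^d) :=
      eq_neg_of_add_eq_zero_left (by rw [hsplit, hbig])
    rw [h1, ← Finset.sum_neg_distrib]
    exact Finset.sum_congr rfl (fun q _ => (neg_smul _ _).symm)
  have hch : (2*e+2).choose 2 = (e+1)*(2*e+1) := by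
    rw [Nat.choose_two_right, show 2*e+2-1 = 2*e+1 by omega,
      show (2*e+2)*(2*e+1) = ((e+1)*(2*e+1))*2 by ring]
    exact Nat.mul_div_cancel _ (by norm_num)
  have hAne : (ppt 0 0) ∈ A := by
    rw [hA]
    exact Finset.mem_image.mpr ⟨(0,0),
      Finset.mem_product.mpr ⟨by simp [hI1], by simp [hJ]⟩, rfl⟩
  refine ⟨T, A, B, ?_, ?_, ?_, ?_, ?_, ⟨?_, ?_⟩, ⟨?_, ?_⟩⟩
  · -- T ≠ 0
    intro h0
    refine nonred d I1 J hcards1 co hcoI1 ∅ (Finset.empty_ssubset.mpr ⟨_, hAne⟩) ?_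
    rw [← hT, h0]
    exact Submodule.zero_mem _
  · -- homogeneous
    rw [hT]
    exact MvPolynomial.IsHomogeneous.sum _ _ _ (fun q _ => smul_pow_homog _ _ _)
  · -- disjoint
    rw [Finset.eq_empty_iff_forall_notMem]
    intro P hP
    rw [Finset.mem_inter, hA, hB] at hP
    obtain ⟨h1, h2⟩ := hP
    obtain ⟨q, hq, hq'⟩ := Finset.mem_image.mp h1
    obtain ⟨q', hq2, hq2'⟩ := Finset.mem_image.mp h2
    have heq := (ppt_inj (hq'.trans hq2'.symm)).1
    have hx1 := (Finset.mem_product.mp hq).1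
    have hx2 := (Finset.mem_product.mp hq2).1
    rw [hI1, Finset.mem_range] at hx1
    rw [hI2, Finset.mem_Ico] at hx2
    omega
  · -- card A
    rw [hA, Finset.card_image_of_injective _ pinj, Finset.card_product, hI1, hJ,
      Finset.card_range, Finset.card_range, hch]
    ring
  · -- card B
    rw [hB, Finset.card_image_of_injective _ pinj, Finset.card_product, hI2, hJ,
      Nat.card_Ico, Finset.card_range, hch, show m+1-(e+1) = e+1 by omega]
    ring
  · -- Computes A T
    show T ∈ Submodule.span ℂ (vero 2 d '' ↑A)
    rw [hT, hA]
    exact computes_gen d (I1 ×ˢ J) co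
  · -- non-redundant A
    intro A' hA' hcomp
    refine nonred d I1 J hcards1 co hcoI1 A' ?_ ?_
    · exact hA'
    · exact hcomp
  · -- Computes B T
    show T ∈ Submodule.span ℂ (vero 2 d '' ↑B)
    rw [hTB, hB]
    exact computes_gen d (I2 ×ˢ J) (fun i j => -(co i j))
  · -- non-redundant B
    intro A' hA' hcomp
    refine nonred d I2 J hcards2 (fun i j => -(co i j))
      (fun i hi j hj => neg_ne_zero.mpr (hcoI2 i hi j hj)) A' ?_ ?_
    · exact hA'
    · exact hTB ▸ hcomp
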